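/- Let η_X and η_Y be real random variables, Z a random variable independent of the pair (η_X, η_Y), and define X := g(Z, η_X) for a measurable function g. Then η_Y is conditionally independent of X given η_X. -/

import Mathlib

open MeasureTheory ProbabilityTheory

/-- If `Z` is independent of the pair `(η_X, η_Y)` and `X := g(Z, η_X)`, then
`η_Y` is conditionally independent of `X` given `η_X`. -/
theorem condIndep_outcome_noise_given_treatment_noise
    {Ω : Type*} [MeasurableSpace Ω] [StandardBorelSpace Ω] [Nonempty Ω]
    (μ : Measure Ω) [IsProbabilityMeasure μ]
    (Z ηX ηY : Ω → ℝ) (hZ : Measurable Z) (hηX : Measurable ηX) (hηY : Measurable ηY)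
    (hindep : IndepFun Z (fun ω => (ηX ω, ηY ω)) μ)
    (g : ℝ → ℝ → ℝ) (hg : Measurable (Function.uncurry g))
    (X : Ω → ℝ) (hX : ∀ ω, X ω = g (Z ω) (ηX ω)) :
    CondIndepFun (MeasurableSpace.comap ηX (by infer_instance))
      (measurable_iff_comap_le.mp hηX) ηY X μ := by
  classical
  letI mAmb : MeasurableSpace Ω := ‹MeasurableSpace Ω›
  have hP : Measurable (fun ω => (ηX ω, ηY ω)) := hηX.prodMk hηY
  set m' : MeasurableSpace Ω := MeasurableSpace.comap ηX (by infer_instance) with hm'_def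
  set mZ : MeasurableSpace Ω := MeasurableSpace.comap Z inferInstance with hmZ_def
  set mY : MeasurableSpace Ω := MeasurableSpace.comap ηY inferInstance with hmY_def
  set m₂ : MeasurableSpace Ω :=
    MeasurableSpace.comap (fun ω => (ηX ω, ηY ω)) inferInstance with hm₂_def
  letI mAmb' : MeasurableSpace Ω := mAmb
  have hm' : m' ≤ _ := measurable_iff_comap_le.mp hηX
  have hmZ : mZ ≤ _ := hZ.comap_le
  have hmY : mY ≤ _ := hηY.comap_le
  have hm₂ : m₂ ≤ _ := hP.comap_le
  have hP₂ : Measurable[m₂] (fun ω => (ηX ω, ηY ω)) := Measurable.of_comap_le le_rfl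
  have h'2 : m' ≤ m₂ := measurable_iff_comap_le.mp (measurable_fst.comp hP₂)
  have hY2 : mY ≤ m₂ := measurable_iff_comap_le.mp (measurable_snd.comp hP₂)
  have hind : Indep mZ m₂ μ := hindep
  have hindm' : Indep mZ m' μ := indep_of_indep_of_le_right hind h'2
  -- conditional expectation of a `mZ`-measurable indicator given `m'` is constant
  have hBconst : ∀ {B : Set Ω}, MeasurableSet[mZ] B →
      (μ⟦B | m'⟧) =ᵐ[μ] fun _ => (μ B).toReal := by
    intro B hB
    have hsm : StronglyMeasurable[mZ] (B.indicator fun _ => (1 : ℝ)) :=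
      stronglyMeasurable_const.indicator hB
    have h := condExp_indep_eq hmZ hm' hsm hindm'
    have hint : (∫ x, B.indicator (fun _ => (1 : ℝ)) x ∂μ) = (μ B).toReal := by
      exact integral_indicator_one (μ := μ) (hmZ _ hB)
    refine h.trans ?_
    rw [hint]
  -- conditional expectation of `1_{A ∩ B}` given `m'` for `A ∈ mY`, `B ∈ mZ`
  have hmul : ∀ {A B : Set Ω}, MeasurableSet[mY] A → MeasurableSet[mZ] B →
      (μ⟦A ∩ B | m'⟧) =ᵐ[μ] fun ω => (μ B).toReal * (μ⟦A | m'⟧) ω := by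
    intro A B hA hB
    have hintB : Integrable (B.indicator fun _ => (1 : ℝ)) μ :=
      (integrable_const 1).indicator (hmZ _ hB)
    have h1 : (μ⟦A ∩ B | m₂⟧) =ᵐ[μ]
        A.indicator (μ[B.indicator fun _ => (1 : ℝ) | m₂]) := by
      rw [show ((A ∩ B).indicator fun _ => (1 : ℝ))
          = A.indicator (B.indicator fun _ => (1 : ℝ)) from
          (Set.indicator_indicator _ _ _).symm]
      exact condExp_indicator hintB (hY2 _ hA)
    have hsm₂ : StronglyMeasurable[mZ] (B.indicator fun _ => (1 : ℝ)) :=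
      stronglyMeasurable_const.indicator hB
    have h2 : (μ[B.indicator fun _ => (1 : ℝ) | m₂]) =ᵐ[μ] fun _ => (μ B).toReal := by
      refine (condExp_indep_eq hmZ hm₂ hsm₂ hind).trans ?_
      have hint : (∫ x, B.indicator (fun _ => (1 : ℝ)) x ∂μ) = (μ B).toReal := by
        exact integral_indicator_one (μ := μ) (hmZ _ hB)
      rw [hint]
    have h3 : (μ⟦A ∩ B | m₂⟧) =ᵐ[μ]
        fun ω => (μ B).toReal * (A.indicator (fun _ => (1 : ℝ)) ω) := by
      filter_upwards [h1, h2] with ω h1ω h2ω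
      rw [h1ω]
      by_cases hω : ω ∈ A
      · rw [Set.indicator_of_mem hω, Set.indicator_of_mem hω, h2ω, mul_one]
      · rw [Set.indicator_of_notMem hω, Set.indicator_of_notMem hω, mul_zero]
    calc (μ⟦A ∩ B | m'⟧)
        =ᵐ[μ] μ[(μ⟦A ∩ B | m₂⟧) | m'] := (condExp_condExp_of_le h'2 hm₂).symm
      _ =ᵐ[μ] μ[(fun ω => (μ B).toReal * (A.indicator (fun _ => (1 : ℝ)) ω)) | m'] :=
          condExp_congr_ae h3
      _ =ᵐ[μ] fun ω => (μ B).toReal * (μ⟦A | m'⟧) ω :=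
          condExp_smul (μ := μ) (m := m') ((μ B).toReal) (A.indicator fun _ => (1 : ℝ))
  -- π-systems
  set p1 : Set (Set Ω) := {s | MeasurableSet[mY] s} with hp1_def
  set p2 : Set (Set Ω) :=
    {s | ∃ B C, MeasurableSet[mZ] B ∧ MeasurableSet[m'] C ∧ s = B ∩ C} with hp2_def
  have hp2meas : ∀ s ∈ p2, MeasurableSet s := by
    rintro s ⟨B, C, hB, hC, rfl⟩
    exact (hmZ _ hB).inter (hm' _ hC)
  have hsets : CondIndepSets m' hm' p1 p2 μ := by
    refine (condIndepSets_iff m' hm' p1 p2 (fun s hs => hmY _ hs) hp2meas μ).mpr ?_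
    rintro A t hA ⟨B, C, hB, hC, rfl⟩
    have hc := hmul (show MeasurableSet[mY] A from hA) hB
    have hcB := hBconst hB
    have hintAB : Integrable ((A ∩ B).indicator fun _ => (1 : ℝ)) μ :=
      (integrable_const 1).indicator ((hmY _ (show MeasurableSet[mY] A from hA)).inter (hmZ _ hB))
    have hintB : Integrable (B.indicator fun _ => (1 : ℝ)) μ :=
      (integrable_const 1).indicator (hmZ _ hB)
    have hL : (μ⟦A ∩ (B ∩ C) | m'⟧) =ᵐ[μ] C.indicator (μ⟦A ∩ B | m'⟧) := by
      have hset : A ∩ (B ∩ C) = C ∩ (A ∩ B) := by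
        ext ω; simp only [Set.mem_inter_iff]; tauto
      rw [hset, show ((C ∩ (A ∩ B)).indicator fun _ => (1 : ℝ))
          = C.indicator ((A ∩ B).indicator fun _ => (1 : ℝ)) from
          (Set.indicator_indicator _ _ _).symm]
      exact condExp_indicator hintAB hC
    have hR : (μ⟦B ∩ C | m'⟧) =ᵐ[μ] C.indicator (μ⟦B | m'⟧) := by
      rw [Set.inter_comm B C, show ((C ∩ B).indicator fun _ => (1 : ℝ))
          = C.indicator (B.indicator fun _ => (1 : ℝ)) from
          (Set.indicator_indicator _ _ _).symm]
      exact condExp_indicator hintB hC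
    filter_upwards [hL, hR, hc, hcB] with ω h1 h2 h3 h4
    rw [h1, Pi.mul_apply, h2]
    by_cases hω : ω ∈ C
    · rw [Set.indicator_of_mem hω, Set.indicator_of_mem hω, h3, h4, mul_comm]
    · rw [Set.indicator_of_notMem hω, Set.indicator_of_notMem hω, mul_zero]
  have hgen1 : mY = MeasurableSpace.generateFrom p1 :=
    (@MeasurableSpace.generateFrom_measurableSet Ω mY).symm
  have hgen2 : mZ ⊔ m' = MeasurableSpace.generateFrom p2 := by
    refine le_antisymm (sup_le ?_ ?_) (MeasurableSpace.generateFrom_le ?_)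
    · intro s hs
      exact MeasurableSpace.measurableSet_generateFrom
        ⟨s, Set.univ, hs, MeasurableSet.univ, (Set.inter_univ s).symm⟩
    · intro s hs
      exact MeasurableSpace.measurableSet_generateFrom
        ⟨Set.univ, s, MeasurableSet.univ, hs, (Set.univ_inter s).symm⟩
    · rintro s ⟨B, C, hB, hC, rfl⟩
      exact ((le_sup_left : mZ ≤ mZ ⊔ m') _ hB).inter ((le_sup_right : m' ≤ mZ ⊔ m') _ hC)
  have pi1 : IsPiSystem p1 := by
    intro s hs t ht _
    show MeasurableSet[mY] (s ∩ t)
    exact MeasurableSet.inter hs ht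
  have pi2 : IsPiSystem p2 := by
    rintro s ⟨B1, C1, hB1, hC1, rfl⟩ t ⟨B2, C2, hB2, hC2, rfl⟩ _
    refine ⟨B1 ∩ B2, C1 ∩ C2, hB1.inter hB2, hC1.inter hC2, ?_⟩
    ext ω; simp only [Set.mem_inter_iff]; tauto
  have key : CondIndep m' mY (mZ ⊔ m') hm' μ :=
    CondIndepSets.condIndep hmY (sup_le hmZ hm') pi1 pi2 hgen1 hgen2 hsets
  have hZm : Measurable[mZ ⊔ m'] Z := measurable_iff_comap_le.mpr le_sup_left
  have hηXm : Measurable[mZ ⊔ m'] ηX := measurable_iff_comap_le.mpr le_sup_right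
  have hXm : Measurable[mZ ⊔ m'] X := by
    have hXeq : X = fun ω => Function.uncurry g (Z ω, ηX ω) := funext fun ω => hX ω
    rw [hXeq]
    exact hg.comp (hZm.prodMk hηXm)
  have hXle : MeasurableSpace.comap X inferInstance ≤ mZ ⊔ m' :=
    measurable_iff_comap_le.mp hXm
  rw [condIndepFun_iff_condIndep]
  exact condIndep_of_condIndep_of_le_right key hXle
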